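/- Let H₁ and H₂ be connected graphs, both with girth at least 7, such that H₁² = H₂² (as graphs on the same vertex set with the square not complete). Then H₁ and H₂ are isomorphic. -/

import Mathlib

open SimpleGraph

variable {V : Type*}

/-- The square of a graph: `x` and `y` are adjacent iff `1 ≤ d_H(x,y) ≤ 2`. -/
def graphSq (H : SimpleGraph V) : SimpleGraph V where
  Adj x y := x ≠ y ∧ (H.Adj x y ∨ ∃ z, H.Adj x z ∧ H.Adj z y)
  symm := by
    constructor
    rintro x y ⟨hxy, h | ⟨z, h1, h2⟩⟩
    · exact ⟨hxy.symm, Or.inl h.symm⟩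
    · exact ⟨hxy.symm, Or.inr ⟨z, h2.symm, h1.symm⟩⟩
  loopless := ⟨fun x h => h.1 rfl⟩

/-- `Q` is a maximal clique of `G`. -/
def IsMaxClique (G : SimpleGraph V) (Q : Set V) : Prop :=
  G.IsClique Q ∧ ∀ R : Set V, G.IsClique R → Q ⊆ R → R = Q

/-- `xy` is a forced edge of `G`: it lies in at least two distinct maximal cliques. -/
def Forced (G : SimpleGraph V) (x y : V) : Prop :=
  G.Adj x y ∧ ∃ Q₁ Q₂ : Set V, Q₁ ≠ Q₂ ∧ IsMaxClique G Q₁ ∧ IsMaxClique G Q₂ ∧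
    x ∈ Q₁ ∧ y ∈ Q₁ ∧ x ∈ Q₂ ∧ y ∈ Q₂

/-- The subgraph of `G` consisting of all forced edges. -/
def forcedSubgraph (G : SimpleGraph V) : SimpleGraph V where
  Adj := Forced G
  symm := by
    constructor
    rintro x y ⟨hadj, Q₁, Q₂, hne, h1, h2, hx1, hy1, hx2, hy2⟩
    exact ⟨hadj.symm, Q₁, Q₂, hne, h1, h2, hy1, hx1, hy2, hx2⟩
  loopless := ⟨fun x h => h.1.ne rfl⟩

/-- `H` contains no cycle of length 3 and no cycle of length 5. -/
def C3C5Free (H : SimpleGraph V) : Prop :=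
  ∀ (v : V) (w : H.Walk v v), w.IsCycle → w.length ≠ 3 ∧ w.length ≠ 5

/-- The set `S` induces a star in `F`: at least two vertices, a center adjacent to
all others, and the non-center vertices pairwise non-adjacent. -/
def IsStarOn (F : SimpleGraph V) (S : Set V) : Prop :=
  S.Nontrivial ∧ ∃ c ∈ S, (∀ x ∈ S, x ≠ c → F.Adj c x) ∧
    ∀ x ∈ S, ∀ y ∈ S, x ≠ c → y ≠ c → x ≠ y → ¬ F.Adj x y

set_option linter.unusedSectionVars false

section Aux
variable {H : SimpleGraph V}

lemma cycle_len_ge (hg : 7 ≤ H.girth) {v : V} (w : H.Walk v v) (hw : w.IsCycle) :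
    7 ≤ w.length := by
  have h1 : H.egirth ≤ w.length := le_egirth.mp le_rfl v w hw
  have h2 : (7:ℕ) ≤ H.egirth.toNat := hg
  have h3 := ENat.toNat_le_toNat h1 (by simp)
  simpa using h3.trans' h2

lemma noC3 (hg : 7 ≤ H.girth) {a b c : V} (h1 : H.Adj a b) (h2 : H.Adj b c)
    (h3 : H.Adj c a) : False := by
  have hac : a ≠ c := fun h => (h ▸ h3).ne rfl
  have hw : (Walk.cons h1 (Walk.cons h2 (Walk.cons h3 Walk.nil))).IsCycle := by
    rw [Walk.isCycle_def, Walk.isTrail_def]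
    refine ⟨?_, by simp, ?_⟩ <;>
      simp_all [Sym2.eq_iff, h1.ne, h2.ne, h3.ne, h1.ne', h2.ne', h3.ne']
  have := cycle_len_ge hg _ hw
  simp at this

lemma noC4 (hg : 7 ≤ H.girth) {a b c d : V} (h1 : H.Adj a b) (h2 : H.Adj b c)
    (h3 : H.Adj c d) (h4 : H.Adj d a) (hac : a ≠ c) (hbd : b ≠ d) : False := by
  have hw : (Walk.cons h1 (Walk.cons h2 (Walk.cons h3 (Walk.cons h4 Walk.nil)))).IsCycle := by
    rw [Walk.isCycle_def, Walk.isTrail_def]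
    refine ⟨?_, by simp, ?_⟩ <;>
      simp_all [Sym2.eq_iff, h1.ne, h2.ne, h3.ne, h4.ne, h1.ne', h2.ne', h3.ne', h4.ne',
        hac.symm, hbd.symm]
  have := cycle_len_ge hg _ hw
  simp at this

lemma noC5 (hg : 7 ≤ H.girth) {a b c d e : V} (h1 : H.Adj a b) (h2 : H.Adj b c)
    (h3 : H.Adj c d) (h4 : H.Adj d e) (h5 : H.Adj e a)
    (hac : a ≠ c) (had : a ≠ d) (hbd : b ≠ d) (hbe : b ≠ e) (hce : c ≠ e) : False := by
  have hw : (Walk.cons h1 (Walk.cons h2 (Walk.cons h3 (Walk.cons h4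
      (Walk.cons h5 Walk.nil))))).IsCycle := by
    rw [Walk.isCycle_def, Walk.isTrail_def]
    refine ⟨?_, by simp, ?_⟩ <;>
      simp_all [Sym2.eq_iff, h1.ne, h2.ne, h3.ne, h4.ne, h5.ne, h1.ne', h2.ne', h3.ne',
        h4.ne', h5.ne', hac.symm, had.symm, hbd.symm, hbe.symm, hce.symm]
  have := cycle_len_ge hg _ hw
  simp at this

lemma noC6 (hg : 7 ≤ H.girth) {a b c d e f : V} (h1 : H.Adj a b) (h2 : H.Adj b c)
    (h3 : H.Adj c d) (h4 : H.Adj d e) (h5 : H.Adj e f) (h6 : H.Adj f a)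
    (hac : a ≠ c) (had : a ≠ d) (hae : a ≠ e) (hbd : b ≠ d) (hbe : b ≠ e) (hbf : b ≠ f)
    (hce : c ≠ e) (hcf : c ≠ f) (hdf : d ≠ f) : False := by
  have hw : (Walk.cons h1 (Walk.cons h2 (Walk.cons h3 (Walk.cons h4
      (Walk.cons h5 (Walk.cons h6 Walk.nil)))))).IsCycle := by
    rw [Walk.isCycle_def, Walk.isTrail_def]
    refine ⟨?_, by simp, ?_⟩ <;>
      simp_all [Sym2.eq_iff, h1.ne, h2.ne, h3.ne, h4.ne, h5.ne, h6.ne, h1.ne', h2.ne',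
        h3.ne', h4.ne', h5.ne', h6.ne', hac.symm, had.symm, hae.symm, hbd.symm, hbe.symm,
        hbf.symm, hce.symm, hcf.symm, hdf.symm]
  have := cycle_len_ge hg _ hw
  simp at this

/-- A set closed under adjacency containing one vertex contains all. -/
lemma closed_all (hc : H.Connected) {S : Set V}
    (hcl : ∀ v ∈ S, ∀ z, H.Adj v z → z ∈ S) {a : V} (ha : a ∈ S) : ∀ v, v ∈ S := by
  have key : ∀ (u w : V) (p : H.Walk u w), w ∈ S → u ∈ S := by
    intro u w p
    induction p with
    | nil => exact id
    | cons h _ ih => exact fun hw => hcl _ (ih hw) _ h.symm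
  intro v
  obtain ⟨w⟩ := hc.preconnected v a
  exact key v a w ha

def leafAt (H : SimpleGraph V) (x c : V) : Prop := H.Adj x c ∧ ∀ z, H.Adj x z → z = c
def hasTwo (H : SimpleGraph V) (x : V) : Prop := ∃ u v, H.Adj x u ∧ H.Adj x v ∧ u ≠ v

lemma sqAdj {x y : V} (h : H.Adj x y) : (graphSq H).Adj x y := ⟨h.ne, Or.inl h⟩

lemma sqAdj2 {x z y : V} (h1 : H.Adj x z) (h2 : H.Adj z y) (hne : x ≠ y) :
    (graphSq H).Adj x y := ⟨hne, Or.inr ⟨z, h1, h2⟩⟩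

lemma leaf_not_two {x c : V} (hl : leafAt H x c) (ht : hasTwo H x) : False := by
  obtain ⟨u, v, hu, hv, huv⟩ := ht
  exact huv ((hl.2 u hu).trans (hl.2 v hv).symm)

lemma leaf_or_two {x u : V} (h : H.Adj x u) : (∃ c, leafAt H x c) ∨ hasTwo H x := by
  by_cases h2 : ∀ z, H.Adj x z → z = u
  · exact Or.inl ⟨u, h, h2⟩
  · push_neg at h2
    obtain ⟨z, hz, hne⟩ := h2
    exact Or.inr ⟨u, z, h, hz, fun e => hne e.symm⟩

/-- If all neighbours of one vertex's neighbours point back to it, the square is complete. -/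
lemma star_contra (hc : H.Connected) (hncH : graphSq H ≠ ⊤) (x : V)
    (hx : ∃ u, H.Adj x u)
    (hall : ∀ u, H.Adj x u → ∀ z, H.Adj u z → z = x) : False := by
  have hS : ∀ v, v = x ∨ H.Adj x v := by
    refine closed_all hc (S := {v | v = x ∨ H.Adj x v}) ?_ (Or.inl rfl)
    rintro v (rfl | hv) z hz
    · exact Or.inr hz
    · exact Or.inl (hall v hv z hz)
  apply hncH
  ext a b
  simp only [top_adj]
  constructor
  · exact fun h => h.1
  · intro hab
    rcases hS a with rfl | ha
    · rcases hS b with rfl | hb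
      · exact absurd rfl hab
      · exact sqAdj hb
    · rcases hS b with rfl | hb
      · exact sqAdj ha.symm
      · exact sqAdj2 ha.symm hb hab

end Aux

section Main
variable {H₁ H₂ : SimpleGraph V}

/-- A leaf of `H₁` is a leaf of `H₂`. -/
lemma lemLeaf (hc₂ : H₂.Connected) (hg₂ : 7 ≤ H₂.girth)
    (hnc₂ : graphSq H₂ ≠ ⊤)
    (hN : ∀ a b, (graphSq H₁).Adj a b ↔ (graphSq H₂).Adj a b)
    {x c : V} (hl : leafAt H₁ x c) : ∃ c', leafAt H₂ x c' := by
  -- x has an H₂-neighbour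
  have hx2 : ∃ u, H₂.Adj x u := by
    rcases ((hN x c).mp (sqAdj hl.1)).2 with h | ⟨m, hm, _⟩
    · exact ⟨c, h⟩
    · exact ⟨m, hm⟩
  obtain ⟨c', hc'⟩ := hx2
  refine ⟨c', hc', ?_⟩
  by_contra hu
  push_neg at hu
  obtain ⟨z, hz, hzc'⟩ := hu
  -- not all neighbours of x's neighbours point back to x (else square complete)
  by_cases hstar : ∀ u, H₂.Adj x u → ∀ w, H₂.Adj u w → w = x
  · exact star_contra hc₂ hnc₂ x ⟨c', hc'⟩ hstar
  push_neg at hstar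
  obtain ⟨u', hxu', w, hu'w, hwx⟩ := hstar
  -- pick v' an H₂-neighbour of x different from u'
  obtain ⟨v', hxv', hv'u'⟩ : ∃ v', H₂.Adj x v' ∧ v' ≠ u' := by
    by_cases h : c' = u'
    · exact ⟨z, hz, fun e => hzc' (e.trans h.symm)⟩
    · exact ⟨c', hc', h⟩
  have hwv' : w ≠ v' := by
    rintro rfl
    exact noC3 hg₂ hxu' hu'w hxv'.symm
  -- G.Adj x w via H₂
  have hGxw : (graphSq H₂).Adj x w := sqAdj2 hxu' hu'w (fun e => hwx e.symm)
  -- translate to H₁: w and v' are both near x in H₁, hence in {c} ∪ N₁(c)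
  have hmem : ∀ s, (graphSq H₁).Adj x s → s = c ∨ H₁.Adj c s := by
    rintro s ⟨hne, h | ⟨t, hxt, hts⟩⟩
    · exact Or.inl (hl.2 s h)
    · exact Or.inr ((hl.2 t hxt) ▸ hts)
  have hw1 := hmem w ((hN x w).mpr hGxw)
  have hv1 := hmem v' ((hN x v').mpr (sqAdj hxv'))
  -- hence G.Adj w v'
  have hGwv' : (graphSq H₁).Adj w v' := by
    rcases hw1 with rfl | hw1
    · rcases hv1 with rfl | hv1
      · exact absurd rfl hwv'
      · exact sqAdj hv1
    · rcases hv1 with rfl | hv1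
      · exact sqAdj hw1.symm
      · exact sqAdj2 hw1.symm hv1 hwv'
  -- contradiction in H₂
  rcases ((hN w v').mp hGwv').2 with h | ⟨s, hws, hsv'⟩
  · exact noC4 hg₂ hxu' hu'w h hxv'.symm (fun e => hwx e.symm) (fun e => hv'u' e.symm)
  · have hsu' : s ≠ u' := by
      rintro rfl
      exact noC3 hg₂ hxu' hsv' hxv'.symm
    have hsx : s ≠ x := by
      rintro rfl
      exact noC3 hg₂ hxu' hu'w hws
    exact noC5 hg₂ hxu' hu'w hws hsv' hxv'.symm (fun e => hwx e.symm) (fun e => hsx e.symm)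
      (fun e => hsu' e.symm) (fun e => hv'u' e.symm) hwv'

/-- Core of Lemma A : configuration leading to a ≥7-girth contradiction. -/
lemma lemA_core (hg₁ : 7 ≤ H₁.girth) (hg₂ : 7 ≤ H₂.girth)
    (hN : ∀ a b, (graphSq H₁).Adj a b ↔ (graphSq H₂).Adj a b)
    {x y m v : V} (hxy : H₁.Adj x y) (hnxy2 : ¬ H₂.Adj x y)
    (hxm : H₂.Adj x m) (hmy : H₂.Adj m y) (hm1x : H₁.Adj m x)
    (hv : H₂.Adj y v) (hvm : v ≠ m) : False := by
  have hvx : v ≠ x := fun h => hnxy2 (h ▸ hv).symm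
  have notGvx : ¬ (graphSq H₂).Adj v x := by
    rintro ⟨_, h | ⟨z, hvz, hzx⟩⟩
    · exact noC4 hg₂ hxm hmy hv h hxy.ne hvm.symm
    · have hzm : z ≠ m := by
        rintro rfl
        exact noC3 hg₂ hv hvz hmy
      have hzy : z ≠ y := by
        rintro rfl
        exact hnxy2 hzx.symm
      exact noC5 hg₂ hxm hmy hv hvz hzx hxy.ne hvx.symm hvm.symm
        (fun e => hzm e.symm) (fun e => hzy e.symm)
  have notG1vx : ¬ (graphSq H₁).Adj v x := fun h => notGvx ((hN v x).mp h)
  have hG1vy : (graphSq H₁).Adj v y := (hN v y).mpr (sqAdj hv.symm)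
  have hG1vm : (graphSq H₁).Adj v m := (hN v m).mpr (sqAdj2 hv.symm hmy.symm hvm)
  -- v has an H₁-path of length 2 to y via b ≠ x
  obtain ⟨b, hvb, hby⟩ : ∃ b, H₁.Adj v b ∧ H₁.Adj b y := by
    rcases hG1vy.2 with h | ⟨b, h1, h2⟩
    · exact absurd (sqAdj2 h hxy.symm hvx) notG1vx
    · exact ⟨b, h1, h2⟩
  have hbx : b ≠ x := by
    rintro rfl
    exact notG1vx (sqAdj hvb)
  -- v has an H₁-path of length 2 to m via t ≠ x
  obtain ⟨t, hvt, htm⟩ : ∃ t, H₁.Adj v t ∧ H₁.Adj t m := by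
    rcases hG1vm.2 with h | ⟨t, h1, h2⟩
    · exact absurd (sqAdj2 h hm1x hvx) notG1vx
    · exact ⟨t, h1, h2⟩
  have htx : t ≠ x := by
    rintro rfl
    exact notG1vx (sqAdj hvt)
  -- assemble the 6-cycle v b y x m t
  have hbm : b ≠ m := by
    rintro rfl
    exact noC3 hg₁ hxy hby.symm hm1x
  have hbt : b ≠ t := by
    rintro rfl
    exact noC4 hg₁ hby hxy.symm hm1x.symm htm.symm hbx (fun e => hmy.ne e.symm)
  have hyt : y ≠ t := by
    rintro rfl
    exact notG1vx (sqAdj2 hvt hxy.symm hvx)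
  exact noC6 hg₁ hvb hby hxy.symm hm1x.symm htm.symm hvt.symm
    hG1vy.1 hvx hvm hbx hbm hbt (fun e => hmy.ne e.symm) hyt
    (fun e => htx e.symm)

/-- Lemma A: an `H₁`-edge between vertices with two `H₂`-neighbours is an `H₂`-edge. -/
lemma lemA (hg₁ : 7 ≤ H₁.girth) (hg₂ : 7 ≤ H₂.girth)
    (hN : ∀ a b, (graphSq H₁).Adj a b ↔ (graphSq H₂).Adj a b)
    {x y : V} (hxy : H₁.Adj x y) (htx : hasTwo H₂ x) (hty : hasTwo H₂ y) :
    H₂.Adj x y := by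
  by_contra hn
  obtain ⟨m, hxm, hmy⟩ : ∃ m, H₂.Adj x m ∧ H₂.Adj m y := by
    rcases ((hN x y).mp (sqAdj hxy)).2 with h | h
    · exact absurd h hn
    · exact h
  have hN' : ∀ a b, (graphSq H₂).Adj a b ↔ (graphSq H₁).Adj a b := fun a b => (hN a b).symm
  have pick : ∀ w : V, hasTwo H₂ w → ∃ u, H₂.Adj w u ∧ u ≠ m := by
    rintro w ⟨u, u', hu, hu', huu'⟩
    by_cases h : u = m
    · exact ⟨u', hu', fun e => huu' (h.trans e.symm)⟩
    · exact ⟨u, hu, h⟩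
  by_cases hI : H₁.Adj m x
  · obtain ⟨v, hyv, hvm⟩ := pick y hty
    exact lemA_core hg₁ hg₂ hN hxy hn hxm hmy hI hyv hvm
  by_cases hII : H₁.Adj m y
  · obtain ⟨u, hxu, hum⟩ := pick x htx
    exact lemA_core hg₁ hg₂ hN hxy.symm (fun h => hn h.symm) hmy.symm hxm.symm hII hxu hum
  -- m is at H₁-distance 2 from both x and y : girth contradiction
  obtain ⟨z, hmz, hzx⟩ : ∃ z, H₁.Adj m z ∧ H₁.Adj z x := by
    rcases ((hN m x).mpr (sqAdj hxm.symm)).2 with h | h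
    · exact absurd h hI
    · exact h
  obtain ⟨w, hmw, hwy⟩ : ∃ w, H₁.Adj m w ∧ H₁.Adj w y := by
    rcases ((hN m y).mpr (sqAdj hmy)).2 with h | h
    · exact absurd h hII
    · exact h
  by_cases hzw : z = w
  · exact noC3 hg₁ hxy (hzw ▸ hwy).symm hzx
  · have hzy : z ≠ y := by
      rintro rfl
      exact hII hmz
    have hwx : w ≠ x := by
      rintro rfl
      exact hI hmw
    exact noC5 hg₁ hmz hzx hxy hwy.symm hmw.symm hxm.ne' hmy.ne hzy
      hzw (fun e => hwx e.symm)

/-- `hasTwo` transfers between the two roots. -/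
lemma two_transfer (hc₁ : H₁.Connected) (hg₁ : 7 ≤ H₁.girth) (hnc₁ : graphSq H₁ ≠ ⊤)
    (hN : ∀ a b, (graphSq H₁).Adj a b ↔ (graphSq H₂).Adj a b)
    {x : V} (ht : hasTwo H₁ x) : hasTwo H₂ x := by
  have hN' : ∀ a b, (graphSq H₂).Adj a b ↔ (graphSq H₁).Adj a b := fun a b => (hN a b).symm
  obtain ⟨u, v, hu, hv, huv⟩ := ht
  obtain ⟨w, hw⟩ : ∃ w, H₂.Adj x w := by
    rcases ((hN x u).mp (sqAdj hu)).2 with h | ⟨m, hm, _⟩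
    · exact ⟨u, h⟩
    · exact ⟨m, hm⟩
  rcases leaf_or_two hw with ⟨c, hlc⟩ | ht2
  · obtain ⟨c', hlc'⟩ := lemLeaf hc₁ hg₁ hnc₁ hN' hlc
    exact (leaf_not_two hlc' ⟨u, v, hu, hv, huv⟩).elim
  · exact ht2

/-- Case A: if every leaf has the same centre in both roots, then `H₁ ≤ H₂`. -/
lemma caseA (hc₁ : H₁.Connected) (hc₂ : H₂.Connected)
    (hg₁ : 7 ≤ H₁.girth) (hg₂ : 7 ≤ H₂.girth)
    (hnc₁ : graphSq H₁ ≠ ⊤) (hnc₂ : graphSq H₂ ≠ ⊤)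
    (hN : ∀ a b, (graphSq H₁).Adj a b ↔ (graphSq H₂).Adj a b)
    (hcc : ∀ x c c', leafAt H₁ x c → leafAt H₂ x c' → c = c')
    {a b : V} (hab : H₁.Adj a b) : H₂.Adj a b := by
  rcases leaf_or_two hab with ⟨c, hlc⟩ | hta
  · have hbc : b = c := hlc.2 b hab
    obtain ⟨c', hlc'⟩ := lemLeaf hc₂ hg₂ hnc₂ hN hlc
    have hc : c = c' := hcc a c c' hlc hlc'
    rw [hbc, hc]
    exact hlc'.1
  · rcases leaf_or_two hab.symm with ⟨d, hld⟩ | htb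
    · have had : a = d := hld.2 a hab.symm
      obtain ⟨d', hld'⟩ := lemLeaf hc₂ hg₂ hnc₂ hN hld
      have hd : d = d' := hcc b d d' hld hld'
      have : H₂.Adj b a := by rw [had, hd]; exact hld'.1
      exact this.symm
    · exact lemA hg₁ hg₂ hN hab (two_transfer hc₁ hg₁ hnc₁ hN hta)
        (two_transfer hc₁ hg₁ hnc₁ hN htb)

section CaseB
variable (hc₁ : H₁.Connected) (hc₂ : H₂.Connected)
  (hg₁ : 7 ≤ H₁.girth) (hg₂ : 7 ≤ H₂.girth)
  (hnc₁ : graphSq H₁ ≠ ⊤) (hnc₂ : graphSq H₂ ≠ ⊤)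
  (hN : ∀ a b, (graphSq H₁).Adj a b ↔ (graphSq H₂).Adj a b)
  {x c c' : V} (hl1 : leafAt H₁ x c) (hl2 : leafAt H₂ x c') (hne : c ≠ c')

include hN hl1 hl2 hne in
lemma cross_edge : H₁.Adj c c' := by
  rcases ((hN x c').mpr (sqAdj hl2.1)).2 with h | ⟨z, hxz, hzc'⟩
  · exact absurd (hl1.2 c' h).symm hne
  · exact (hl1.2 z hxz) ▸ hzc'

include hc₁ hc₂ hg₁ hg₂ hnc₁ hnc₂ hN hl1 hl2 hne in
lemma keyA {w : V} (hcw : H₁.Adj c w) (htw : hasTwo H₁ w) : w = c' := by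
  have hN' : ∀ a b, (graphSq H₂).Adj a b ↔ (graphSq H₁).Adj a b := fun a b => (hN a b).symm
  by_contra hwc'
  have hcc' : H₁.Adj c c' := cross_edge hN hl1 hl2 hne
  have h2cc' : H₂.Adj c' c := cross_edge hN' hl2 hl1 hne.symm
  have two1c : hasTwo H₁ c := ⟨x, c', hl1.1.symm, hcc', hl2.1.ne⟩
  have two2c : hasTwo H₂ c := two_transfer hc₁ hg₁ hnc₁ hN two1c
  have two2w : hasTwo H₂ w := two_transfer hc₁ hg₁ hnc₁ hN htw
  have hw2 : H₂.Adj c w := lemA hg₁ hg₂ hN hcw two2c two2w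
  have hwx : w ≠ x := by
    rintro rfl
    exact leaf_not_two hl1 htw
  have notG : ¬ (graphSq H₂).Adj x w := by
    rintro ⟨_, h | ⟨z, hxz, hzw⟩⟩
    · exact hwc' (hl2.2 w h)
    · have hz : z = c' := hl2.2 z hxz
      subst hz
      exact noC3 hg₂ hzw hw2.symm h2cc'.symm
  exact notG ((hN x w).mp (sqAdj2 hl1.1 hcw (fun e => hwx e.symm)))

include hc₁ hc₂ hg₁ hg₂ hnc₁ hnc₂ hN hl1 hl2 hne in
lemma keyB {w : V} (hc'w : H₁.Adj c' w) (htw : hasTwo H₁ w) : w = c := by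
  have hN' : ∀ a b, (graphSq H₂).Adj a b ↔ (graphSq H₁).Adj a b := fun a b => (hN a b).symm
  by_contra hwc
  have hcc' : H₁.Adj c c' := cross_edge hN hl1 hl2 hne
  have h2cc' : H₂.Adj c' c := cross_edge hN' hl2 hl1 hne.symm
  have two1c' : hasTwo H₁ c' := by
    have two2c' : hasTwo H₂ c' := ⟨x, c, hl2.1.symm, h2cc', hl1.1.ne⟩
    exact two_transfer hc₂ hg₂ hnc₂ hN' two2c'
  have two2c' : hasTwo H₂ c' := ⟨x, c, hl2.1.symm, h2cc', hl1.1.ne⟩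
  have two2w : hasTwo H₂ w := two_transfer hc₁ hg₁ hnc₁ hN htw
  have hw2 : H₂.Adj c' w := lemA hg₁ hg₂ hN hc'w two2c' two2w
  have hwx : w ≠ x := by
    rintro rfl
    exact hne.symm (hl1.2 c' hc'w.symm)
  have notG1 : ¬ (graphSq H₁).Adj x w := by
    rintro ⟨_, h | ⟨z, hxz, hzw⟩⟩
    · exact hwc (hl1.2 w h)
    · have hz : z = c := hl1.2 z hxz
      subst hz
      exact noC3 hg₁ hcc' hc'w hzw.symm
  exact notG1 ((hN x w).mpr (sqAdj2 hl2.1 hw2 (fun e => hwx e.symm)))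

include hc₁ hc₂ hg₁ hg₂ hnc₁ hnc₂ hN hl1 hl2 hne in
lemma allS1 : ∀ v, v = c ∨ v = c' ∨ ∃ d, leafAt H₁ v d ∧ (d = c ∨ d = c') := by
  refine closed_all hc₁ (S := {v | v = c ∨ v = c' ∨ ∃ d, leafAt H₁ v d ∧ (d = c ∨ d = c')})
    ?_ (Or.inl rfl)
  rintro v (rfl | rfl | ⟨d, hld, hd⟩) z hz
  · rcases leaf_or_two hz.symm with ⟨d, hld⟩ | ht
    · exact Or.inr (Or.inr ⟨d, hld, Or.inl (hld.2 v hz.symm).symm⟩)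
    · exact Or.inr (Or.inl (keyA hc₁ hc₂ hg₁ hg₂ hnc₁ hnc₂ hN hl1 hl2 hne hz ht))
  · rcases leaf_or_two hz.symm with ⟨d, hld⟩ | ht
    · exact Or.inr (Or.inr ⟨d, hld, Or.inr (hld.2 v hz.symm).symm⟩)
    · exact Or.inl (keyB hc₁ hc₂ hg₁ hg₂ hnc₁ hnc₂ hN hl1 hl2 hne hz ht)
  · have hzd : z = d := hld.2 z hz
    rcases hd with rfl | rfl
    · exact Or.inl hzd
    · exact Or.inr (Or.inl hzd)

include hc₁ hc₂ hg₁ hg₂ hnc₁ hnc₂ hN hl1 hl2 hne in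
lemma key9 {v d' : V} (hlv : leafAt H₁ v c) (hlv' : leafAt H₂ v d') :
    d' = c' := by
  have hN' : ∀ a b, (graphSq H₂).Adj a b ↔ (graphSq H₁).Adj a b := fun a b => (hN a b).symm
  have hcc' : H₁.Adj c c' := cross_edge hN hl1 hl2 hne
  have h2cc' : H₂.Adj c' c := cross_edge hN' hl2 hl1 hne.symm
  have two1c : hasTwo H₁ c := ⟨x, c', hl1.1.symm, hcc', hl2.1.ne⟩
  have two1c' : hasTwo H₁ c' :=
    two_transfer hc₂ hg₂ hnc₂ hN' ⟨x, c, hl2.1.symm, h2cc', hl1.1.ne⟩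
  have hv1 : v ≠ c := by
    rintro rfl
    exact leaf_not_two hlv two1c
  have hv2 : v ≠ c' := by
    rintro rfl
    exact leaf_not_two hlv two1c'
  obtain ⟨e, hle, he⟩ : ∃ e, leafAt H₂ v e ∧ (e = c' ∨ e = c) := by
    rcases allS1 hc₂ hc₁ hg₂ hg₁ hnc₂ hnc₁ hN' hl2 hl1 hne.symm v with rfl | rfl | h
    · exact absurd rfl hv2
    · exact absurd rfl hv1
    · exact h
  have hde : d' = e := hle.2 d' hlv'.1
  rcases he with he | he
  · exact hde.trans he
  -- e = c : contradiction
  exfalso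
  rw [he] at hle
  by_cases hvx : v = x
  · rw [hvx] at hle
    exact hne (hl2.2 c hle.1)
  · have hGvx : (graphSq H₁).Adj v x := sqAdj2 hlv.1 hl1.1.symm hvx
    rcases ((hN v x).mp hGvx).2 with h | ⟨z, hvz, hzx⟩
    · exact hl1.1.ne (hle.2 x h)
    · have hz : z = c := hle.2 z hvz
      rw [hz] at hzx
      exact hne (hl2.2 c hzx.symm)

include hc₁ hc₂ hg₁ hg₂ hnc₁ hnc₂ hN hl1 hl2 hne in
lemma key9b {v d' : V} (hlv : leafAt H₁ v c') (hlv' : leafAt H₂ v d') :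
    d' = c := by
  have hN' : ∀ a b, (graphSq H₂).Adj a b ↔ (graphSq H₁).Adj a b := fun a b => (hN a b).symm
  have hcc' : H₁.Adj c c' := cross_edge hN hl1 hl2 hne
  have h2cc' : H₂.Adj c' c := cross_edge hN' hl2 hl1 hne.symm
  have two1c : hasTwo H₁ c := ⟨x, c', hl1.1.symm, hcc', hl2.1.ne⟩
  have two1c' : hasTwo H₁ c' :=
    two_transfer hc₂ hg₂ hnc₂ hN' ⟨x, c, hl2.1.symm, h2cc', hl1.1.ne⟩
  have hvx : v ≠ x := by
    rintro rfl
    exact hne.symm (hl1.2 c' hlv.1)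
  have hv1 : v ≠ c := by
    rintro rfl
    exact leaf_not_two hlv two1c
  have hv2 : v ≠ c' := by
    rintro rfl
    exact leaf_not_two hlv two1c'
  obtain ⟨e, hle, he⟩ : ∃ e, leafAt H₂ v e ∧ (e = c' ∨ e = c) := by
    rcases allS1 hc₂ hc₁ hg₂ hg₁ hnc₂ hnc₁ hN' hl2 hl1 hne.symm v with rfl | rfl | h
    · exact absurd rfl hv2
    · exact absurd rfl hv1
    · exact h
  have hde : d' = e := hle.2 d' hlv'.1
  rcases he with he | he
  swap
  · exact hde.trans he
  -- e = c' : contradiction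
  exfalso
  rw [he] at hle
  have notG1 : ¬ (graphSq H₁).Adj v x := by
    rintro ⟨_, h | ⟨z, hvz, hzx⟩⟩
    · exact hl2.1.ne (hlv.2 x h)
    · have hz : z = c' := hlv.2 z hvz
      rw [hz] at hzx
      exact hne.symm (hl1.2 c' hzx.symm)
  exact notG1 ((hN v x).mpr (sqAdj2 hle.1 hl2.1.symm hvx))

include hc₁ hc₂ hg₁ hg₂ hnc₁ hnc₂ hN hl1 hl2 hne in
lemma caseB_dir [DecidableEq V] {a b : V} (hab : H₁.Adj a b) :
    H₂.Adj (Equiv.swap c c' a) (Equiv.swap c c' b) := by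
  have hN' : ∀ a b, (graphSq H₂).Adj a b ↔ (graphSq H₁).Adj a b := fun a b => (hN a b).symm
  have hcc' : H₁.Adj c c' := cross_edge hN hl1 hl2 hne
  have h2cc' : H₂.Adj c' c := cross_edge hN' hl2 hl1 hne.symm
  have two1c : hasTwo H₁ c := ⟨x, c', hl1.1.symm, hcc', hl2.1.ne⟩
  have two1c' : hasTwo H₁ c' :=
    two_transfer hc₂ hg₂ hnc₂ hN' ⟨x, c, hl2.1.symm, h2cc', hl1.1.ne⟩
  have swl : Equiv.swap c c' c = c' := Equiv.swap_apply_left c c'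
  have swr : Equiv.swap c c' c' = c := Equiv.swap_apply_right c c'
  have swo : ∀ v, v ≠ c → v ≠ c' → Equiv.swap c c' v = v :=
    fun v h1 h2 => Equiv.swap_apply_of_ne_of_ne h1 h2
  have leafne : ∀ v d, leafAt H₁ v d → v ≠ c ∧ v ≠ c' := by
    intro v d hld
    constructor
    · rintro rfl; exact leaf_not_two hld two1c
    · rintro rfl; exact leaf_not_two hld two1c'
  rcases allS1 hc₁ hc₂ hg₁ hg₂ hnc₁ hnc₂ hN hl1 hl2 hne a with ha | ha | ⟨d, hld, hd⟩
  · rw [ha] at hab ⊢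
    rcases allS1 hc₁ hc₂ hg₁ hg₂ hnc₁ hnc₂ hN hl1 hl2 hne b with hb | hb | ⟨e, hle, he⟩
    · rw [hb] at hab; exact absurd rfl hab.ne
    · rw [hb, swl, swr]; exact h2cc'
    · obtain ⟨hb1, hb2⟩ := leafne b e hle
      rw [swl, swo b hb1 hb2]
      have hec : e = c := (hle.2 c hab.symm).symm
      rw [hec] at hle
      obtain ⟨e', hle'⟩ := lemLeaf hc₂ hg₂ hnc₂ hN hle
      have he' : e' = c' := key9 hc₁ hc₂ hg₁ hg₂ hnc₁ hnc₂ hN hl1 hl2 hne hle hle'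
      exact (he' ▸ hle'.1).symm
  · rw [ha] at hab ⊢
    rcases allS1 hc₁ hc₂ hg₁ hg₂ hnc₁ hnc₂ hN hl1 hl2 hne b with hb | hb | ⟨e, hle, he⟩
    · rw [hb, swl, swr]; exact h2cc'.symm
    · rw [hb] at hab; exact absurd rfl hab.ne
    · obtain ⟨hb1, hb2⟩ := leafne b e hle
      rw [swr, swo b hb1 hb2]
      have hec : e = c' := (hle.2 c' hab.symm).symm
      rw [hec] at hle
      obtain ⟨e', hle'⟩ := lemLeaf hc₂ hg₂ hnc₂ hN hle
      have he' : e' = c := key9b hc₁ hc₂ hg₁ hg₂ hnc₁ hnc₂ hN hl1 hl2 hne hle hle'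
      exact (he' ▸ hle'.1).symm
  · obtain ⟨ha1, ha2⟩ := leafne a d hld
    rcases allS1 hc₁ hc₂ hg₁ hg₂ hnc₁ hnc₂ hN hl1 hl2 hne b with hb | hb | ⟨e, hle, he⟩
    · rw [hb] at hab ⊢
      rw [swl, swo a ha1 ha2]
      have hdc : d = c := (hld.2 c hab).symm
      rw [hdc] at hld
      obtain ⟨d', hld'⟩ := lemLeaf hc₂ hg₂ hnc₂ hN hld
      have hd' : d' = c' := key9 hc₁ hc₂ hg₁ hg₂ hnc₁ hnc₂ hN hl1 hl2 hne hld hld'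
      exact hd' ▸ hld'.1
    · rw [hb] at hab ⊢
      rw [swr, swo a ha1 ha2]
      have hdc : d = c' := (hld.2 c' hab).symm
      rw [hdc] at hld
      obtain ⟨d', hld'⟩ := lemLeaf hc₂ hg₂ hnc₂ hN hld
      have hd' : d' = c := key9b hc₁ hc₂ hg₁ hg₂ hnc₁ hnc₂ hN hl1 hl2 hne hld hld'
      exact hd' ▸ hld'.1
    · exfalso
      have hbd : b = d := hld.2 b hab
      obtain ⟨hb1, hb2⟩ := leafne b e hle
      rcases hd with rfl | rfl
      · exact hb1 hbd
      · exact hb2 hbd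

end CaseB
end Main

theorem stmt15 (H₁ H₂ : SimpleGraph V)
    (hc₁ : H₁.Connected) (hc₂ : H₂.Connected)
    (hg₁ : 7 ≤ H₁.girth) (hg₂ : 7 ≤ H₂.girth)
    (hsq : graphSq H₁ = graphSq H₂) (hnc : graphSq H₁ ≠ ⊤) :
    Nonempty (H₁ ≃g H₂) := by
  classical
  have hN : ∀ a b, (graphSq H₁).Adj a b ↔ (graphSq H₂).Adj a b := fun a b => by rw [hsq]
  have hN' : ∀ a b, (graphSq H₂).Adj a b ↔ (graphSq H₁).Adj a b := fun a b => (hN a b).symm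
  have hnc₂ : graphSq H₂ ≠ ⊤ := hsq ▸ hnc
  by_cases hcc : ∀ x c c', leafAt H₁ x c → leafAt H₂ x c' → c = c'
  · have heq : H₁ = H₂ := by
      ext a b
      exact ⟨caseA hc₁ hc₂ hg₁ hg₂ hnc hnc₂ hN hcc,
        caseA hc₂ hc₁ hg₂ hg₁ hnc₂ hnc hN'
          (fun x c c' h h' => (hcc x c' c h' h).symm)⟩
    rw [← heq]
    exact ⟨RelIso.refl H₁.Adj⟩
  · push_neg at hcc
    obtain ⟨x, c, c', hl1, hl2, hne⟩ := hcc
    refine ⟨⟨Equiv.swap c c', @fun a b => ?_⟩⟩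
    constructor
    · intro h
      have h2 := caseB_dir hc₂ hc₁ hg₂ hg₁ hnc₂ hnc hN' hl2 hl1 hne.symm h
      rwa [Equiv.swap_comm, Equiv.swap_apply_self, Equiv.swap_apply_self] at h2
    · exact caseB_dir hc₁ hc₂ hg₁ hg₂ hnc hnc₂ hN hl1 hl2 hne
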